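/- Let p and q be distinct primes and let G be a finite group of order p^s·q^t with s, t > 0. Suppose K is a normal Sylow q-subgroup of G that is also a minimal normal subgroup of G, and suppose some Sylow p-subgroup of G is not normal in G. Then the action of G by conjugation on the set Syl_p(G) of its Sylow p-subgroups is primitive (transitive with maximal point stabilizers). -/

import Mathlib

/-- Let `G` be a finite group of order `p^s·q^t` (`p ≠ q` primes, `s, t > 0`), let `K`
be a normal Sylow `q`-subgroup of `G` that is a minimal normal subgroup, and suppose
some Sylow `p`-subgroup of `G` is not normal.  Then the conjugation action of `G` on
`Syl_p(G)` is primitive: it is transitive and all point stabilizers are maximal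
subgroups (coatoms in the subgroup lattice). -/
theorem primitive_action_of_minimal_normal_sylow (p q s t : ℕ)
    (hp : p.Prime) (hq : q.Prime) (hpq : p ≠ q) (hs : 0 < s) (ht : 0 < t)
    (G : Type*) [Group G] [Finite G] (hcard : Nat.card G = p ^ s * q ^ t)
    (K : Subgroup G) (hKnormal : K.Normal) (hKcard : Nat.card K = q ^ t)
    (hKmin : ∀ N : Subgroup G, N.Normal → N ≤ K → N ≠ ⊥ → N = K)
    (hP : ∃ P : Sylow p G, ¬ (P : Subgroup G).Normal) :
    MulAction.IsPretransitive G (Sylow p G) ∧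
      ∀ P : Sylow p G, IsCoatom (MulAction.stabilizer G P) := by
  haveI : Fact p.Prime := ⟨hp⟩
  haveI : Fact q.Prime := ⟨hq⟩
  haveI := hKnormal
  have htrans : MulAction.IsPretransitive G (Sylow p G) := inferInstance
  refine ⟨htrans, fun P => ?_⟩
  rw [Sylow.stabilizer_eq_normalizer]
  -- K is abelian
  have hKab : ∀ x ∈ K, ∀ y ∈ K, x * y = y * x := by
    have hKnt : Nontrivial K := by
      rw [← Finite.one_lt_card_iff_nontrivial, hKcard]
      exact Nat.one_lt_pow ht.ne' hq.one_lt
    have hKp : IsPGroup q K := IsPGroup.of_card hKcard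
    have hZnt : Nontrivial (Subgroup.center K) := hKp.center_nontrivial
    have hZ : ((Subgroup.center K).map K.subtype) = K := by
      apply hKmin
      · infer_instance
      · exact Subgroup.map_subtype_le _
      · intro hbot
        rw [Subgroup.map_eq_bot_iff_of_injective _ K.subtype_injective] at hbot
        exact (Subgroup.nontrivial_iff_ne_bot _).mp hZnt hbot
    intro x hx y hy
    have hxZ : x ∈ (Subgroup.center K).map K.subtype := by rw [hZ]; exact hx
    obtain ⟨⟨x', hx'K⟩, hx'c, rfl⟩ := hxZ
    have hcomm := (Subgroup.mem_center_iff.mp hx'c) ⟨y, hy⟩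
    exact congrArg Subtype.val hcomm.symm
  -- p ^ s divides the cardinality of P
  have hpsP : p ^ s ∣ Nat.card P :=
    P.pow_dvd_card_of_pow_dvd_card (hcard ▸ Dvd.intro _ rfl)
  -- K ⊔ P = ⊤
  have hsup : K ⊔ (P : Subgroup G) = ⊤ := by
    apply Subgroup.eq_top_of_card_eq
    have h1 : q ^ t ∣ Nat.card (K ⊔ (P : Subgroup G) : Subgroup G) :=
      hKcard ▸ Subgroup.card_dvd_of_le le_sup_left
    have h2 : p ^ s ∣ Nat.card (K ⊔ (P : Subgroup G) : Subgroup G) :=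
      hpsP.trans (Subgroup.card_dvd_of_le le_sup_right)
    have hcop : Nat.Coprime (p ^ s) (q ^ t) :=
      Nat.Coprime.pow s t ((Nat.coprime_primes hp hq).mpr hpq)
    have hdvd : p ^ s * q ^ t ∣ Nat.card (K ⊔ (P : Subgroup G) : Subgroup G) :=
      hcop.mul_dvd_of_dvd_of_dvd h2 h1
    have hle : Nat.card (K ⊔ (P : Subgroup G) : Subgroup G) ∣ Nat.card G := by
      have := Subgroup.card_dvd_of_le (le_top (a := K ⊔ (P : Subgroup G)))
      rwa [Subgroup.card_top] at this
    exact Nat.dvd_antisymm hle (hcard ▸ hdvd)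
  constructor
  · -- normalizer ≠ ⊤
    intro htop
    obtain ⟨Q, hQ⟩ := hP
    haveI hPn : (P : Subgroup G).Normal := Subgroup.normalizer_eq_top_iff.mp htop
    obtain ⟨g, rfl⟩ := htrans.exists_smul_eq P Q
    rw [Sylow.smul_eq_of_normal] at hQ
    exact hQ hPn
  · -- maximality
    intro H hH
    have hPH : (P : Subgroup G) ≤ H := Subgroup.le_normalizer.trans hH.le
    set D : Subgroup G := K ⊓ H with hD
    have hsupKH : K ⊔ H = ⊤ := top_le_iff.mp (hsup ▸ sup_le_sup_left hPH K)
    have hDnormal : D.Normal := by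
      constructor
      intro d hd g
      have hg : g ∈ (↑(K ⊔ H) : Set G) := by rw [hsupKH]; trivial
      rw [Subgroup.normal_mul] at hg
      obtain ⟨k, hk, h, hh, rfl⟩ := hg
      have hd' : h * d * h⁻¹ ∈ D :=
        ⟨hKnormal.conj_mem d hd.1 h, H.mul_mem (H.mul_mem hh hd.2) (H.inv_mem hh)⟩
      have heq : (k * h) * d * (k * h)⁻¹ = h * d * h⁻¹ := by
        have hcomm := hKab k hk (h * d * h⁻¹) hd'.1
        calc (k * h) * d * (k * h)⁻¹ = k * (h * d * h⁻¹) * k⁻¹ := by group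
          _ = h * d * h⁻¹ := by rw [hcomm]; group
      show (k * h) * d * (k * h)⁻¹ ∈ D
      rw [heq]; exact hd'
    -- Dedekind modular law : H = P ⊔ D
    have hmod : (P : Subgroup G) ⊔ D = H := by
      apply le_antisymm (sup_le hPH inf_le_right)
      intro x hx
      have hx' : x ∈ (↑(K ⊔ (P : Subgroup G)) : Set G) := by rw [hsup]; trivial
      rw [Subgroup.normal_mul] at hx'
      obtain ⟨k, hk, y, hy, rfl⟩ := hx'
      have hkH : k ∈ H := by
        simpa using H.mul_mem hx (H.inv_mem (hPH hy))
      exact Subgroup.mul_mem _ (Subgroup.mem_sup_right ⟨hk, hkH⟩)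
        (Subgroup.mem_sup_left hy)
    by_cases hDbot : D = ⊥
    · exfalso
      rw [hDbot, sup_bot_eq] at hmod
      have : H ≤ Subgroup.normalizer (P : Subgroup G) := by
        rw [← hmod]; exact Subgroup.le_normalizer
      exact hH.2 this
    · have hDK : D = K := hKmin D hDnormal inf_le_left hDbot
      have hKH : K ≤ H := hDK ▸ inf_le_right
      exact top_le_iff.mp (hsup ▸ sup_le hKH hPH)
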